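/- Let n be a positive integer, let A be a complex symmetric n×n matrix with I − AᴴA positive definite (operator norm ‖A‖ < 1), and let S = [[λ, μ], [ν, ρ]] be a complex symplectic 2n×2n matrix (Sᵀ J S = J with J = [[0, I], [−I, 0]]) which maps K-positive vectors to K-positive vectors, i.e. vᴴ K v > 0 implies (Sv)ᴴ K (Sv) > 0, where K = [[I, 0], [0, −I]]. Then the matrix λ + μA is invertible. -/

import Mathlib

open Matrix
open scoped ComplexOrder

/-- If `A` is complex symmetric with `I − AᴴA` positive definite (`‖A‖ < 1`)
and `S = [[λ, μ], [ν, ρ]]` is complex symplectic mapping `K`-positive vectors to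
`K`-positive vectors, then `λ + μA` is invertible. -/
theorem semigroup_action_denominator_invertible (n : ℕ) (hn : 0 < n)
    (A lam mu nu rho : Matrix (Fin n) (Fin n) ℂ)
    (hA : Aᵀ = A) (hApd : ((1 : Matrix (Fin n) (Fin n) ℂ) - Aᴴ * A).PosDef)
    (hS : (fromBlocks lam mu nu rho)ᵀ *
        fromBlocks (0 : Matrix (Fin n) (Fin n) ℂ) (1 : Matrix (Fin n) (Fin n) ℂ)
          (-1 : Matrix (Fin n) (Fin n) ℂ) (0 : Matrix (Fin n) (Fin n) ℂ) *
        fromBlocks lam mu nu rho =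
      fromBlocks (0 : Matrix (Fin n) (Fin n) ℂ) (1 : Matrix (Fin n) (Fin n) ℂ)
        (-1 : Matrix (Fin n) (Fin n) ℂ) (0 : Matrix (Fin n) (Fin n) ℂ))
    (hpos : ∀ v : (Fin n ⊕ Fin n) → ℂ,
      0 < star v ⬝ᵥ ((fromBlocks (1 : Matrix (Fin n) (Fin n) ℂ) 0 0
          (-1 : Matrix (Fin n) (Fin n) ℂ)) *ᵥ v) →
      0 < star ((fromBlocks lam mu nu rho) *ᵥ v) ⬝ᵥ
        ((fromBlocks (1 : Matrix (Fin n) (Fin n) ℂ) 0 0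
          (-1 : Matrix (Fin n) (Fin n) ℂ)) *ᵥ ((fromBlocks lam mu nu rho) *ᵥ v))) :
    IsUnit (lam + mu * A) := by
  rw [← Matrix.mulVec_injective_iff_isUnit]
  have key : ∀ x : Fin n → ℂ, (lam + mu * A) *ᵥ x = 0 → x = 0 := by
    intro x hx
    by_contra hxne
    have hstar : star (Sum.elim x (A *ᵥ x)) = Sum.elim (star x) (star (A *ᵥ x)) := by
      funext i; cases i <;> rfl
    have heq : star x ⬝ᵥ (((1 : Matrix (Fin n) (Fin n) ℂ) - Aᴴ * A) *ᵥ x)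
        = star x ⬝ᵥ x - star (A *ᵥ x) ⬝ᵥ (A *ᵥ x) := by
      rw [sub_mulVec, dotProduct_sub, one_mulVec, ← mulVec_mulVec, dotProduct_mulVec,
        ← star_mulVec]
    have hv : 0 < star (Sum.elim x (A *ᵥ x)) ⬝ᵥ
        ((fromBlocks (1 : Matrix (Fin n) (Fin n) ℂ) 0 0
          (-1 : Matrix (Fin n) (Fin n) ℂ)) *ᵥ Sum.elim x (A *ᵥ x)) := by
      rw [fromBlocks_mulVec]
      simp only [Sum.elim_comp_inl, Sum.elim_comp_inr, one_mulVec, zero_mulVec, add_zero,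
        zero_add, neg_mulVec]
      rw [hstar, sumElim_dotProduct_sumElim, dotProduct_neg, ← sub_eq_add_neg, ← heq]
      exact hApd.dotProduct_mulVec_pos hxne
    have hgt := hpos _ hv
    have hSv : (fromBlocks lam mu nu rho) *ᵥ Sum.elim x (A *ᵥ x)
        = Sum.elim (0 : Fin n → ℂ) (nu *ᵥ x + rho *ᵥ (A *ᵥ x)) := by
      rw [fromBlocks_mulVec]
      simp only [Sum.elim_comp_inl, Sum.elim_comp_inr]
      congr 1
      rw [mulVec_mulVec, ← add_mulVec, hx]
    rw [hSv] at hgt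
    set w := nu *ᵥ x + rho *ᵥ (A *ᵥ x) with hw
    have hstar2 : star (Sum.elim (0 : Fin n → ℂ) w) = Sum.elim (star (0 : Fin n → ℂ)) (star w) := by
      funext i; cases i <;> rfl
    rw [fromBlocks_mulVec] at hgt
    simp only [Sum.elim_comp_inl, Sum.elim_comp_inr, one_mulVec, zero_mulVec, add_zero,
      zero_add, neg_mulVec] at hgt
    rw [hstar2, sumElim_dotProduct_sumElim, dotProduct_neg, star_zero, zero_dotProduct,
      zero_add] at hgt
    exact absurd (neg_pos.mp hgt) (dotProduct_star_self_nonneg w).not_gt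
  intro a b hab
  have := key (a - b) (by rw [mulVec_sub, hab, sub_self])
  exact sub_eq_zero.mp this
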